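/- Let K be a field, U a K-vector space, and f a nondegenerate alternating bilinear form on U. Let M₁, M₂, M₃ be generators which are pairwise opposite (M₁ ∩ M₂ = M₁ ∩ M₃ = M₂ ∩ M₃ = 0). If the three cardinal dimensions of M₁, M₂, M₃ are not all equal, then at least one of the three pairs fails to be complementary: M₁ + M₂ ≠ U, or M₁ + M₃ ≠ U, or M₂ + M₃ ≠ U. (Symplectic instance of the paper's Corollary on triples of mutually opposite generators of unequal dimensions.) -/

import Mathlib

/-- A subspace is totally isotropic for a bilinear form. -/
def TotallyIsotropic {K U : Type*} [Field K] [AddCommGroup U] [Module K U]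
    (f : U →ₗ[K] U →ₗ[K] K) (W : Submodule K U) : Prop :=
  ∀ x ∈ W, ∀ y ∈ W, f x y = 0

/-- A generator: a maximal totally isotropic subspace. -/
def IsGenerator {K U : Type*} [Field K] [AddCommGroup U] [Module K U]
    (f : U →ₗ[K] U →ₗ[K] K) (W : Submodule K U) : Prop :=
  TotallyIsotropic f W ∧
    ∀ W' : Submodule K U, TotallyIsotropic f W' → W ≤ W' → W' = W

/-- If `A` and `B` are complementary, and `C` is complementary to `B`, then
projecting onto `A` along `B` restricts to an isomorphism `C ≃ A`, so their
ranks agree. -/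
lemma rank_eq_of_compl {K U : Type*} [Field K] [AddCommGroup U] [Module K U]
    (A B C : Submodule K U) (hAB : IsCompl A B)
    (hinf : B ⊓ C = ⊥) (hsup : B ⊔ C = ⊤) :
    Module.rank K C = Module.rank K A := by
  set π := A.linearProjOfIsCompl B hAB
  set g : C →ₗ[K] A := π.comp C.subtype
  have hbij : Function.Bijective g := by
    constructor
    · intro x y hxy
      have h : π ((x : U) - y) = 0 := by
        simp only [map_sub]
        rw [show π (x : U) = g x from rfl, show π (y : U) = g y from rfl, hxy, sub_self]
      have hmem : ((x : U) - y) ∈ B :=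
        (Submodule.linearProjOfIsCompl_apply_eq_zero_iff hAB).mp h
      have hmemC : ((x : U) - y) ∈ C := sub_mem x.2 y.2
      have : ((x : U) - y) ∈ B ⊓ C := ⟨hmem, hmemC⟩
      rw [hinf] at this
      exact Subtype.ext (by simpa [sub_eq_zero] using this)
    · intro a
      have ha : (a : U) ∈ B ⊔ C := hsup ▸ Submodule.mem_top
      obtain ⟨b, hb, c, hc, hbc⟩ := Submodule.mem_sup.mp ha
      refine ⟨⟨c, hc⟩, ?_⟩
      have : π c = π (a : U) - π b := by
        rw [← map_sub]; congr 1; rw [← hbc]; abel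
      apply Subtype.ext
      show (π c : U) = a
      rw [this, show π (a : U) = a from Submodule.projectionOnto_apply_left hAB a,
        show π b = 0 from Submodule.projectionOnto_apply_of_mem_right hAB hb, sub_zero]
  exact (LinearEquiv.ofBijective g hbij).rank_eq

/-- Symplectic instance of the Corollary: three mutually opposite generators of
unequal dimensions cannot be pairwise complementary. -/
theorem stmt_4 {K U : Type*} [Field K] [AddCommGroup U] [Module K U]
    (f : U →ₗ[K] U →ₗ[K] K)
    (halt : ∀ x, f x x = 0)
    (hnd : ∀ x, (∀ y, f x y = 0) → x = 0)
    (M₁ M₂ M₃ : Submodule K U)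
    (hg1 : IsGenerator f M₁) (hg2 : IsGenerator f M₂) (hg3 : IsGenerator f M₃)
    (h12 : M₁ ⊓ M₂ = ⊥) (h13 : M₁ ⊓ M₃ = ⊥) (h23 : M₂ ⊓ M₃ = ⊥)
    (hne : ¬ (Module.rank K M₁ = Module.rank K M₂ ∧
              Module.rank K M₂ = Module.rank K M₃)) :
    M₁ ⊔ M₂ ≠ ⊤ ∨ M₁ ⊔ M₃ ≠ ⊤ ∨ M₂ ⊔ M₃ ≠ ⊤ := by
  by_contra h
  push_neg at h
  obtain ⟨hs12, hs13, hs23⟩ := h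
  have hc12 : IsCompl M₁ M₂ := ⟨disjoint_iff.mpr h12, codisjoint_iff.mpr hs12⟩
  have hc21 : IsCompl M₂ M₁ := hc12.symm
  have e1 : Module.rank K M₃ = Module.rank K M₁ :=
    rank_eq_of_compl M₁ M₂ M₃ hc12 h23 hs23
  have e2 : Module.rank K M₃ = Module.rank K M₂ :=
    rank_eq_of_compl M₂ M₁ M₃ hc21 h13 hs13
  exact hne ⟨e1 ▸ e2 ▸ rfl, e2 ▸ e1 ▸ rfl⟩
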